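/- For every integer n ≥ 3, the sum over i = 1 to n−2 of sin(iπ/n) / sin((i+1)π/n) equals (n−1)·cos(π/n). -/

import Mathlib

open Real Finset

lemma aux_sin_pos {n k : ℕ} (hn : 3 ≤ n) (hk1 : 1 ≤ k) (hk2 : k ≤ n - 1) :
    0 < Real.sin (k * Real.pi / n) := by
  have hn0 : (0:ℝ) < n := by exact_mod_cast (by omega : 0 < n)
  have hk0 : (0:ℝ) < k := by exact_mod_cast hk1
  have hkn : (k:ℝ) < n := by exact_mod_cast (by omega : k < n)
  apply Real.sin_pos_of_pos_of_lt_pi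
  · positivity
  · rw [div_lt_iff₀ hn0]
    nlinarith [Real.pi_pos]

lemma cot_sum_zero {n : ℕ} (hn : 3 ≤ n) :
    ∑ k ∈ Finset.Icc 1 (n-1),
      Real.cos (k * Real.pi / n) / Real.sin (k * Real.pi / n) = 0 := by
  have hn0 : (0:ℝ) < n := by exact_mod_cast (by omega : 0 < n)
  have key : ∑ k ∈ Finset.Icc 1 (n-1), Real.cos (k * Real.pi / n) / Real.sin (k * Real.pi / n)
      = ∑ k ∈ Finset.Icc 1 (n-1), -(Real.cos (k * Real.pi / n) / Real.sin (k * Real.pi / n)) := by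
    apply Finset.sum_nbij' (fun k => n - k) (fun k => n - k)
    · intro a ha; simp only [Finset.mem_Icc] at *; omega
    · intro a ha; simp only [Finset.mem_Icc] at *; omega
    · intro a ha; simp only [Finset.mem_Icc] at ha; omega
    · intro a ha; simp only [Finset.mem_Icc] at ha; omega
    · intro a ha
      simp only [Finset.mem_Icc] at ha
      have hc : ((n - a : ℕ) : ℝ) = (n : ℝ) - a := by
        have : a ≤ n := by omega
        push_cast [Nat.cast_sub this]; ring
      have harg : ((n - a : ℕ) : ℝ) * Real.pi / n = Real.pi - a * Real.pi / n := by
        rw [hc]; field_simp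
      rw [harg, Real.cos_pi_sub, Real.sin_pi_sub]
      ring
  linarith [key, Finset.sum_neg_distrib (s := Finset.Icc 1 (n-1))
    (f := fun k : ℕ => Real.cos (k * Real.pi / n) / Real.sin (k * Real.pi / n))]

theorem sum_sin_ratio_pred_eq (n : ℕ) (hn : 3 ≤ n) :
    ∑ i ∈ Finset.Icc 1 (n - 2),
      Real.sin (i * Real.pi / n) / Real.sin ((i + 1) * Real.pi / n) =
      (n - 1 : ℝ) * Real.cos (Real.pi / n) := by
  have hn0 : (0:ℝ) < n := by exact_mod_cast (by omega : 0 < n)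
  have hs1 : 0 < Real.sin (Real.pi / n) := by
    have := aux_sin_pos (n := n) (k := 1) hn le_rfl (by omega)
    simpa using this
  have hterm : ∀ i ∈ Finset.Icc 1 (n-2),
      Real.sin (i * Real.pi / n) / Real.sin ((i + 1) * Real.pi / n)
        = Real.cos (Real.pi / n)
          - Real.sin (Real.pi / n) * (Real.cos ((i+1) * Real.pi / n) / Real.sin ((i+1) * Real.pi / n)) := by
    intro i hi
    simp only [Finset.mem_Icc] at hi
    have hs : 0 < Real.sin (((i+1 : ℕ)) * Real.pi / n) :=
      aux_sin_pos hn (by omega) (by omega)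
    have hs' : Real.sin (((i:ℝ)+1) * Real.pi / n) ≠ 0 := by
      push_cast at hs; exact ne_of_gt hs
    have hsin : Real.sin ((i:ℝ) * Real.pi / n)
        = Real.sin (((i:ℝ)+1) * Real.pi / n) * Real.cos (Real.pi / n)
          - Real.cos (((i:ℝ)+1) * Real.pi / n) * Real.sin (Real.pi / n) := by
      have h1 : (i:ℝ) * Real.pi / n = ((i:ℝ)+1) * Real.pi / n - Real.pi / n := by ring
      rw [h1, Real.sin_sub]
    rw [hsin]
    field_simp
  rw [Finset.sum_congr rfl hterm, Finset.sum_sub_distrib, Finset.sum_const,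
    ← Finset.mul_sum]
  have hcard : (Finset.Icc 1 (n-2)).card = n - 2 := by
    rw [Nat.card_Icc]; omega
  have hre : ∑ i ∈ Finset.Icc 1 (n-2),
      Real.cos (((i:ℝ)+1) * Real.pi / n) / Real.sin (((i:ℝ)+1) * Real.pi / n)
      = ∑ k ∈ Finset.Icc 2 (n-1),
        Real.cos (k * Real.pi / n) / Real.sin (k * Real.pi / n) := by
    apply Finset.sum_nbij' (fun k => k + 1) (fun k => k - 1)
    · intro a ha; simp only [Finset.mem_Icc] at *; omega
    · intro a ha; simp only [Finset.mem_Icc] at *; omega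
    · intro a ha; simp only [Finset.mem_Icc] at ha; omega
    · intro a ha; simp only [Finset.mem_Icc] at ha; omega
    · intro a ha; push_cast; ring_nf
  have hsplit : ∑ k ∈ Finset.Icc 2 (n-1),
      Real.cos (k * Real.pi / n) / Real.sin (k * Real.pi / n)
      = - (Real.cos (Real.pi / n) / Real.sin (Real.pi / n)) := by
    have h1 : Finset.Icc 1 (n-1) = insert 1 (Finset.Icc 2 (n-1)) := by
      ext x; simp only [Finset.mem_Icc, Finset.mem_insert]; omega
    have h2 := cot_sum_zero hn
    rw [h1, Finset.sum_insert (by simp)] at h2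
    have : Real.cos ((1:ℕ) * Real.pi / n) / Real.sin ((1:ℕ) * Real.pi / n)
        = Real.cos (Real.pi / n) / Real.sin (Real.pi / n) := by norm_num
    rw [this] at h2
    linarith
  rw [hre, hsplit, hcard]
  have hc2 : ((n - 2 : ℕ) : ℝ) = (n : ℝ) - 2 := by
    push_cast [Nat.cast_sub (by omega : 2 ≤ n)]; ring
  rw [nsmul_eq_mul, hc2]
  field_simp
  ring
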